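/- Let H be a finite-dimensional real inner product space, let A be a self-adjoint operator on H with A ≥ δI for some δ > 0, let β ∈ (0,1), and let μ > 0. Then A^{−β} = (2 μ^{1−β} sin(πβ)/π) ∫_{−1}^{1} (1−η)^{−β} (1+η)^{β−1} (μ(1−η) I + (1+η) A)⁻¹ dη, where A^{−β} is defined by the spectral theorem and the integral is a convergent improper operator-valued (Bochner) integral over (−1,1). -/

import Mathlib

open scoped RealInnerProductSpace
open MeasureTheory


section BalakrishnanHelpers
open MeasureTheory Real

private lemma betaReal {β : ℝ} (hβ0 : 0 < β) (hβ1 : β < 1) :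
    IntegrableOn (fun t : ℝ => t ^ (β - 1) * (1 - t) ^ (-β)) (Set.Ioo 0 1) volume ∧
    ∫ t in Set.Ioo (0:ℝ) 1, t ^ (β - 1) * (1 - t) ^ (-β)
      = Real.pi / Real.sin (Real.pi * β) := by
  have hcomp : ∀ t ∈ Set.Ioo (0:ℝ) 1,
      ((t:ℂ) ^ ((β:ℂ) - 1) * (1 - (t:ℂ)) ^ ((1 - (β:ℂ)) - 1))
        = ((t ^ (β - 1) * (1 - t) ^ (-β) : ℝ) : ℂ) := by
    intro t ht
    have h1 : ((t ^ (β-1) : ℝ) : ℂ) = (t:ℂ) ^ ((β:ℂ) - 1) := by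
      rw [Complex.ofReal_cpow ht.1.le]; norm_num
    have h2 : (((1-t) ^ (-β) : ℝ) : ℂ) = (1 - (t:ℂ)) ^ ((1 - (β:ℂ)) - 1) := by
      rw [Complex.ofReal_cpow (by linarith [ht.2] : (0:ℝ) ≤ 1 - t)]; push_cast; ring_nf
    rw [Complex.ofReal_mul, h1, h2]
  have hconv := (Complex.betaIntegral_convergent (u := (β:ℂ)) (v := 1 - (β:ℂ))
    (by simpa using hβ0) (by simp; linarith)).1
  have hconv' : IntegrableOn
      (fun t : ℝ => (t:ℂ) ^ ((β:ℂ) - 1) * (1 - (t:ℂ)) ^ ((1 - (β:ℂ)) - 1))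
      (Set.Ioo 0 1) volume := by
    have := hconv.mono_set Set.Ioo_subset_Ioc_self
    simpa using this
  constructor
  · have : IntegrableOn (fun t : ℝ =>
        ((t:ℂ) ^ ((β:ℂ) - 1) * (1 - (t:ℂ)) ^ ((1 - (β:ℂ)) - 1)).re)
        (Set.Ioo 0 1) volume := hconv'.re
    refine this.congr_fun (fun t ht => ?_) measurableSet_Ioo
    dsimp only; rw [hcomp t ht, Complex.ofReal_re]
  · have hI : Complex.betaIntegral β (1 - β)
        = ((∫ t in Set.Ioo (0:ℝ) 1, t ^ (β - 1) * (1 - t) ^ (-β) : ℝ) : ℂ) := by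
      rw [Complex.betaIntegral, intervalIntegral.integral_of_le zero_le_one,
        MeasureTheory.integral_Ioc_eq_integral_Ioo]
      rw [setIntegral_congr_fun measurableSet_Ioo (fun t ht => hcomp t ht)]
      exact integral_ofReal
    have h1 := Complex.Gamma_mul_Gamma_eq_betaIntegral
      (s := (β:ℂ)) (t := 1 - (β:ℂ)) (by simpa using hβ0) (by simp; linarith)
    have h2 : ((β:ℂ) + (1 - (β:ℂ))) = 1 := by ring
    rw [h2, Complex.Gamma_one, one_mul] at h1
    have h3 : Complex.Gamma (β:ℂ) * Complex.Gamma (1 - (β:ℂ))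
        = ((Real.pi / Real.sin (Real.pi * β) : ℝ) : ℂ) := by
      have : (1 - (β:ℂ)) = ((1 - β : ℝ) : ℂ) := by push_cast; ring
      rw [this, Complex.Gamma_ofReal, Complex.Gamma_ofReal,
        ← Complex.ofReal_mul, Real.Gamma_mul_Gamma_one_sub]
    rw [h3, hI] at h1
    exact_mod_cast h1.symm

private lemma substAux {β μ l : ℝ} (hβ0 : 0 < β) (hβ1 : β < 1) (hμ : 0 < μ) (hl : 0 < l) :
    IntegrableOn (fun η : ℝ =>
        (1 - η) ^ (-β) * (1 + η) ^ (β - 1) * (μ * (1 - η) + (1 + η) * l)⁻¹)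
      (Set.Ioo (-1) 1) volume ∧
    ∫ η in Set.Ioo (-1:ℝ) 1,
        (1 - η) ^ (-β) * (1 + η) ^ (β - 1) * (μ * (1 - η) + (1 + η) * l)⁻¹
      = Real.pi * μ ^ (β - 1) * l ^ (-β) / (2 * Real.sin (Real.pi * β)) := by
  set s : Set ℝ := Set.Ioo (-1) 1 with hs
  set D : ℝ → ℝ := fun η => μ * (1 - η) + (1 + η) * l with hD
  set φ : ℝ → ℝ := fun η => l * (1 + η) / D η with hφ
  set φ' : ℝ → ℝ := fun η => 2 * l * μ / (D η) ^ 2 with hφ'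
  have hDpos : ∀ η ∈ s, 0 < D η := by
    rintro η ⟨h1, h2⟩
    have : 0 < 1 - η := by linarith
    have : 0 < 1 + η := by linarith
    positivity
  have hderiv : ∀ η ∈ s, HasDerivWithinAt φ (φ' η) s η := by
    intro η hη
    have hne : D η ≠ 0 := (hDpos η hη).ne'
    have h1 : HasDerivAt (fun η : ℝ => l * (1 + η)) l η := by
      simpa using ((hasDerivAt_id η).const_add (1:ℝ)).const_mul l
    have h2 : HasDerivAt D (l - μ) η := by
      have : HasDerivAt (fun η : ℝ => μ * (1 - η) + (1 + η) * l) (l - μ) η := by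
        have ha : HasDerivAt (fun η : ℝ => μ * (1 - η)) (-μ) η := by
          simpa using (((hasDerivAt_id η).const_sub (1:ℝ)).const_mul μ)
        have hb : HasDerivAt (fun η : ℝ => (1 + η) * l) l η := by
          simpa using ((hasDerivAt_id η).const_add (1:ℝ)).mul_const l
        exact (ha.add hb).congr_deriv (by ring)
      exact this
    have h3 := (h1.div h2 hne)
    have h4 : (l * D η - l * (1 + η) * (l - μ)) / (D η) ^ 2 = φ' η := by
      rw [hφ']
      field_simp
      ring
    rw [h4] at h3
    exact h3.hasDerivWithinAt
  have hinj : Set.InjOn φ s := by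
    intro a ha b hb hab
    have hda := hDpos a ha
    have hdb := hDpos b hb
    rw [hφ] at hab
    field_simp [hda.ne', hdb.ne'] at hab
    have hab' : l * (1 + a) * (μ * (1 - b) + (1 + b) * l)
        = l * (1 + b) * (μ * (1 - a) + (1 + a) * l) := by
      simp only [hD] at hab; linear_combination l * hab
    have h0 : 2 * l * μ * (a - b) = 0 := by linear_combination hab'
    have h2 : a - b = 0 := by
      have hpos := mul_pos (mul_pos (by norm_num : (0:ℝ) < 2) hl) hμ
      rcases mul_eq_zero.mp h0 with h | h
      · exact absurd h hpos.ne'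
      · exact h
    linarith
  have himg : φ '' s = Set.Ioo 0 1 := by
    ext t
    constructor
    · rintro ⟨η, hη, rfl⟩
      have hd := hDpos η hη
      obtain ⟨h1, h2⟩ := hη
      have hnum : 0 < l * (1 + η) := by nlinarith
      constructor
      · exact div_pos hnum hd
      · rw [div_lt_one hd]
        show l * (1 + η) < μ * (1 - η) + (1 + η) * l
        nlinarith
    · rintro ⟨ht0, ht1⟩
      set P : ℝ := t * μ + (1 - t) * l with hP
      have hPpos : 0 < P := by nlinarith
      refine ⟨(t * μ - (1 - t) * l) / P, ⟨?_, ?_⟩, ?_⟩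
      · rw [lt_div_iff₀ hPpos]; nlinarith
      · rw [div_lt_one hPpos]; nlinarith
      · show l * (1 + (t * μ - (1 - t) * l) / P) /
            (μ * (1 - (t * μ - (1 - t) * l) / P) + (1 + (t * μ - (1 - t) * l) / P) * l) = t
        have h1p : 1 + (t * μ - (1 - t) * l) / P = 2 * t * μ / P := by
          field_simp; ring
        have h1m : 1 - (t * μ - (1 - t) * l) / P = 2 * (1 - t) * l / P := by
          field_simp; ring
        rw [h1p, h1m]
        have hden : μ * (2 * (1 - t) * l / P) + 2 * t * μ / P * l = 2 * μ * l / P := by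
          field_simp; ring
        rw [hden]
        field_simp
  -- pointwise identity
  have hpoint : ∀ η ∈ s, |φ' η| • ((φ η) ^ (β - 1) * (1 - φ η) ^ (-β))
      = (2 * l ^ β * μ ^ (1 - β)) *
        ((1 - η) ^ (-β) * (1 + η) ^ (β - 1) * (D η)⁻¹) := by
    intro η hη
    have hd := hDpos η hη
    obtain ⟨ha, hb⟩ := hη
    have h1m : (0:ℝ) < 1 - η := by linarith
    have h1p : (0:ℝ) < 1 + η := by linarith
    have hone : 1 - φ η = μ * (1 - η) / D η := by
      rw [hφ]; field_simp [hd.ne']; rw [hD]; ring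
    have hphi : φ η = l * (1 + η) / D η := rfl
    rw [hone, hphi, smul_eq_mul]
    rw [Real.div_rpow (by positivity) hd.le, Real.div_rpow (by positivity) hd.le,
      Real.mul_rpow hl.le h1p.le, Real.mul_rpow hμ.le h1m.le]
    have e1 : l ^ β = l ^ (β - 1) * l := by
      rw [← Real.rpow_add_one hl.ne']; norm_num
    have e2 : μ ^ (1 - β) = μ ^ (-β) * μ := by
      rw [← Real.rpow_add_one hμ.ne']; congr 1; ring
    have e3 : (D η) ^ (β - 1) = (D η) ^ β / D η := by
      rw [Real.rpow_sub hd, Real.rpow_one]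
    have e4 : (D η) ^ (-β) = ((D η) ^ β)⁻¹ := by
      rw [Real.rpow_neg hd.le]
    have habs : |φ' η| = 2 * l * μ / (D η) ^ 2 := by
      rw [hφ', abs_of_pos (by positivity)]
    rw [habs, e1, e2, e3, e4]
    have hDβ : (0:ℝ) < (D η) ^ β := Real.rpow_pos_of_pos hd β
    field_simp
  have key := integral_image_eq_integral_abs_deriv_smul measurableSet_Ioo hderiv hinj
    (fun t => t ^ (β - 1) * (1 - t) ^ (-β))
  rw [himg] at key
  rw [(betaReal hβ0 hβ1).2] at key
  rw [setIntegral_congr_fun measurableSet_Ioo hpoint] at key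
  rw [MeasureTheory.integral_const_mul] at key
  have hC : (0:ℝ) < 2 * l ^ β * μ ^ (1 - β) := by positivity
  have hsin : 0 < Real.sin (Real.pi * β) :=
    Real.sin_pos_of_pos_of_lt_pi (by positivity) (by nlinarith [Real.pi_pos])
  constructor
  · have hInt := (integrableOn_image_iff_integrableOn_abs_deriv_smul measurableSet_Ioo hderiv hinj
      (fun t => t ^ (β - 1) * (1 - t) ^ (-β))).mp (by rw [himg]; exact (betaReal hβ0 hβ1).1)
    have hInt2 : IntegrableOn (fun η => (2 * l ^ β * μ ^ (1 - β))⁻¹ *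
        (2 * l ^ β * μ ^ (1 - β) * ((1 - η) ^ (-β) * (1 + η) ^ (β - 1) * (D η)⁻¹))) s volume :=
      (hInt.congr_fun hpoint measurableSet_Ioo).const_mul ((2 * l ^ β * μ ^ (1 - β))⁻¹)
    refine hInt2.congr_fun (fun η hη => ?_) measurableSet_Ioo
    show (2 * l ^ β * μ ^ (1 - β))⁻¹ *
        (2 * l ^ β * μ ^ (1 - β) * ((1 - η) ^ (-β) * (1 + η) ^ (β - 1) * (D η)⁻¹)) = _
    rw [inv_mul_cancel_left₀ hC.ne']
  · show (∫ η in s, (1 - η) ^ (-β) * (1 + η) ^ (β - 1) * (D η)⁻¹)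
        = Real.pi * μ ^ (β - 1) * l ^ (-β) / (2 * Real.sin (Real.pi * β))
    have h6 : (∫ η in s, (1 - η) ^ (-β) * (1 + η) ^ (β - 1) * (D η)⁻¹)
        = Real.pi / Real.sin (Real.pi * β) / (2 * l ^ β * μ ^ (1 - β)) := by
      rw [eq_div_iff hC.ne', mul_comm]
      exact key.symm
    rw [h6]
    have em : μ ^ (β - 1) = (μ ^ (1 - β))⁻¹ := by
      rw [← Real.rpow_neg hμ.le]; congr 1; ring
    have el : l ^ (-β) = (l ^ β)⁻¹ := Real.rpow_neg hl.le β
    have hlb : (0:ℝ) < l ^ β := Real.rpow_pos_of_pos hl β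
    have hmb : (0:ℝ) < μ ^ (1 - β) := Real.rpow_pos_of_pos hμ _
    rw [em, el]
    field_simp [hlb.ne', hmb.ne', hsin.ne']

end BalakrishnanHelpers

/-- Integral representation of `A^{−β}` obtained from the Balakrishnan formula by
the change of variable `θ = μ(1−η)/(1+η)`:
`A^{−β} = (2 μ^{1−β} sin(πβ)/π) ∫_{−1}^{1} (1−η)^{−β}(1+η)^{β−1}
(μ(1−η)I + (1+η)A)⁻¹ dη`. -/
theorem balakrishnan_formula_finite_interval
    {H : Type*} [NormedAddCommGroup H] [InnerProductSpace ℝ H] [FiniteDimensional ℝ H]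
    (A : H →L[ℝ] H)
    (hAsym : ∀ x y : H, ⟪A x, y⟫ = ⟪x, A y⟫)
    (δ : ℝ) (hδ : 0 < δ)
    (hAδ : ∀ x : H, δ * ‖x‖ ^ 2 ≤ ⟪A x, x⟫)
    (β : ℝ) (hβ : β ∈ Set.Ioo (0 : ℝ) 1)
    (μ : ℝ) (hμ : 0 < μ)
    -- spectral decomposition of `A` and the spectral definition of `A^{−β}`
    (n : ℕ) (e : OrthonormalBasis (Fin n) ℝ H) (lam : Fin n → ℝ)
    (hAe : ∀ k, A (e k) = lam k • e k)
    (Aneg : H →L[ℝ] H)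
    (hAneg : ∀ k, Aneg (e k) = (lam k ^ (-β)) • e k) :
    IntegrableOn
        (fun η : ℝ => ((1 - η) ^ (-β) * (1 + η) ^ (β - 1)) •
          Ring.inverse ((μ * (1 - η)) • (1 : H →L[ℝ] H) + (1 + η) • A))
        (Set.Ioo (-1) 1) volume ∧
      Aneg = (2 * μ ^ (1 - β) * Real.sin (Real.pi * β) / Real.pi) •
        ∫ η in Set.Ioo (-1 : ℝ) 1,
          ((1 - η) ^ (-β) * (1 + η) ^ (β - 1)) •
            Ring.inverse ((μ * (1 - η)) • (1 : H →L[ℝ] H) + (1 + η) • A) := by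
  obtain ⟨hβ0, hβ1⟩ := hβ
  -- notation
  let B : ℝ → (H →L[ℝ] H) := fun η => (μ * (1 - η)) • (1 : H →L[ℝ] H) + (1 + η) • A
  let c : Fin n → ℝ → ℝ := fun k η => μ * (1 - η) + (1 + η) * lam k
  let hfun : ℝ → ℝ := fun η => (1 - η) ^ (-β) * (1 + η) ^ (β - 1)
  have hnorm1 : ∀ k, ‖e k‖ = 1 := fun k => e.orthonormal.1 k
  have hlam : ∀ k, δ ≤ lam k := by
    intro k
    have h1 := hAδ (e k)
    rw [hAe k, real_inner_smul_left, real_inner_self_eq_norm_sq, hnorm1 k] at h1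
    simpa using h1
  have hlam0 : ∀ k, 0 < lam k := fun k => lt_of_lt_of_le hδ (hlam k)
  have hext : ∀ (S T : H →L[ℝ] H), (∀ k, S (e k) = T (e k)) → S = T := by
    intro S T hST
    apply ContinuousLinearMap.coe_injective
    apply e.toBasis.ext
    intro k
    simpa using hST k
  have hBk : ∀ η k, B η (e k) = (c k η) • e k := by
    intro η k
    show (μ * (1 - η)) • (e k) + (1 + η) • A (e k) = _
    rw [hAe k, smul_smul, ← add_smul]
  let Binv : ℝ → (H →L[ℝ] H) := fun η =>
    LinearMap.toContinuousLinearMap ((e.toBasis.constr ℝ) (fun k => (c k η)⁻¹ • e k))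
  have hBinvk : ∀ η k, Binv η (e k) = (c k η)⁻¹ • e k := by
    intro η k
    show ((e.toBasis.constr ℝ) (fun k => (c k η)⁻¹ • e k)) (e k) = _
    conv_lhs => rw [show e k = e.toBasis k by simp]
    rw [Module.Basis.constr_basis]
  have hcpos : ∀ η ∈ Set.Ioo (-1:ℝ) 1, ∀ k, 0 < c k η := by
    rintro η ⟨h1, h2⟩ k
    have := hlam0 k
    have : 0 < μ * (1 - η) := by nlinarith
    have : 0 < (1 + η) * lam k := by nlinarith [hlam0 k]
    show 0 < μ * (1 - η) + (1 + η) * lam k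
    linarith
  have hmul1 : ∀ η ∈ Set.Ioo (-1:ℝ) 1, B η * Binv η = 1 := by
    intro η hη
    apply hext
    intro k
    rw [ContinuousLinearMap.mul_apply, hBinvk, _root_.map_smul, hBk, smul_smul,
      inv_mul_cancel₀ (hcpos η hη k).ne', one_smul, ContinuousLinearMap.one_apply]
  have hmul2 : ∀ η ∈ Set.Ioo (-1:ℝ) 1, Binv η * B η = 1 := by
    intro η hη
    apply hext
    intro k
    rw [ContinuousLinearMap.mul_apply, hBk, _root_.map_smul, hBinvk, smul_smul,
      mul_inv_cancel₀ (hcpos η hη k).ne', one_smul, ContinuousLinearMap.one_apply]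
  have hRinv : ∀ η ∈ Set.Ioo (-1:ℝ) 1, Ring.inverse (B η) = Binv η := by
    intro η hη
    exact Ring.inverse_unit ⟨B η, Binv η, hmul1 η hη, hmul2 η hη⟩
  -- lower bound and norm estimate
  set m : ℝ := 2 * min μ δ with hm
  have hmpos : 0 < m := by
    have : 0 < min μ δ := lt_min hμ hδ
    positivity
  have hlower : ∀ η ∈ Set.Ioo (-1:ℝ) 1, ∀ y : H, m * ‖y‖ ^ 2 ≤ ⟪B η y, y⟫ := by
    rintro η ⟨h1, h2⟩ y
    have hA := hAδ y
    have hBy : ⟪B η y, y⟫ = μ * (1 - η) * ‖y‖ ^ 2 + (1 + η) * ⟪A y, y⟫ := by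
      show ⟪(μ * (1 - η)) • y + (1 + η) • A y, y⟫ = _
      rw [inner_add_left, real_inner_smul_left, real_inner_smul_left,
        real_inner_self_eq_norm_sq]
    rw [hBy]
    have hmin1 : min μ δ ≤ μ := min_le_left _ _
    have hmin2 : min μ δ ≤ δ := min_le_right _ _
    have hy2 : (0:ℝ) ≤ ‖y‖ ^ 2 := sq_nonneg _
    have e1 : (0:ℝ) ≤ (1 - η) * (μ - min μ δ) * ‖y‖ ^ 2 := by
      apply mul_nonneg (mul_nonneg (by linarith) (by linarith)) hy2
    have e2 : (0:ℝ) ≤ (1 + η) * (⟪A y, y⟫ - δ * ‖y‖ ^ 2) := by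
      apply mul_nonneg (by linarith) (by linarith)
    have e3 : (0:ℝ) ≤ (1 + η) * (δ - min μ δ) * ‖y‖ ^ 2 := by
      apply mul_nonneg (mul_nonneg (by linarith) (by linarith)) hy2
    rw [hm]
    nlinarith
  have hBinv_bound : ∀ η ∈ Set.Ioo (-1:ℝ) 1, ‖Binv η‖ ≤ m⁻¹ := by
    intro η hη
    apply ContinuousLinearMap.opNorm_le_bound _ (by positivity)
    intro x
    have hyx : B η (Binv η x) = x := by
      have h1 := congrArg (fun T : H →L[ℝ] H => T x) (hmul1 η hη)
      simpa using h1
    have h1 := hlower η hη (Binv η x)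
    rw [hyx] at h1
    have h2 : ⟪x, Binv η x⟫ ≤ ‖x‖ * ‖Binv η x‖ := real_inner_le_norm _ _
    by_cases hy : ‖Binv η x‖ = 0
    · rw [hy]; positivity
    · have hy0 : 0 < ‖Binv η x‖ := lt_of_le_of_ne (norm_nonneg _) (Ne.symm hy)
      have h3 : m * ‖Binv η x‖ ^ 2 ≤ ‖x‖ * ‖Binv η x‖ := h1.trans h2
      rw [← mul_le_mul_iff_right₀ hmpos, ← mul_assoc, mul_inv_cancel₀ hmpos.ne', one_mul]
      nlinarith [h3, hy0]
  -- continuity of the integrand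
  have hBcont : Continuous B := by
    apply Continuous.add
    · exact (continuous_const.mul (continuous_const.sub continuous_id)).smul continuous_const
    · exact (continuous_const.add continuous_id).smul continuous_const
  have hcont : ContinuousOn
      (fun η : ℝ => (hfun η) • Ring.inverse (B η)) (Set.Ioo (-1) 1) := by
    apply ContinuousOn.smul (f := hfun) (g := fun η => Ring.inverse (B η))
    · apply ContinuousOn.mul
      · apply ContinuousOn.rpow_const (continuous_const.sub continuous_id).continuousOn
        rintro η ⟨h1, h2⟩
        exact Or.inl (show (1:ℝ) - η ≠ 0 by intro hc; linarith)
      · apply ContinuousOn.rpow_const (continuous_const.add continuous_id).continuousOn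
        rintro η ⟨h1, h2⟩
        exact Or.inl (show (1:ℝ) + η ≠ 0 by intro hc; linarith)
    · intro η hη
      apply ContinuousAt.continuousWithinAt
      have hu : ContinuousAt (Ring.inverse : (H →L[ℝ] H) → (H →L[ℝ] H)) (B η) :=
        NormedRing.inverse_continuousAt ⟨B η, Binv η, hmul1 η hη, hmul2 η hη⟩
      exact hu.comp hBcont.continuousAt
  -- integrability of the scalar weight
  have hInth : IntegrableOn hfun (Set.Ioo (-1) 1) volume := by
    have h2μ := (substAux hβ0 hβ1 hμ hμ).1
    have h3 : IntegrableOn (fun η : ℝ => (2 * μ) *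
        ((1 - η) ^ (-β) * (1 + η) ^ (β - 1) * (μ * (1 - η) + (1 + η) * μ)⁻¹))
        (Set.Ioo (-1) 1) volume := h2μ.const_mul (2 * μ)
    refine h3.congr_fun (fun η hη => ?_) measurableSet_Ioo
    have hd : μ * (1 - η) + (1 + η) * μ = 2 * μ := by ring
    dsimp only; rw [hd]
    show 2 * μ * ((1 - η) ^ (-β) * (1 + η) ^ (β - 1) * (2 * μ)⁻¹)
        = (1 - η) ^ (-β) * (1 + η) ^ (β - 1)
    field_simp
  have hFint : IntegrableOn
      (fun η : ℝ => ((1 - η) ^ (-β) * (1 + η) ^ (β - 1)) •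
        Ring.inverse ((μ * (1 - η)) • (1 : H →L[ℝ] H) + (1 + η) • A))
      (Set.Ioo (-1) 1) volume := by
    apply Integrable.mono' (hInth.const_mul m⁻¹)
      (hcont.aestronglyMeasurable measurableSet_Ioo)
    rw [ae_restrict_iff' measurableSet_Ioo]
    filter_upwards with η
    intro hη
    obtain ⟨h1, h2⟩ := hη
    have hh0 : 0 ≤ hfun η := by
      apply mul_nonneg <;> apply Real.rpow_nonneg <;> linarith
    show ‖((1 - η) ^ (-β) * (1 + η) ^ (β - 1)) •
        Ring.inverse ((μ * (1 - η)) • (1 : H →L[ℝ] H) + (1 + η) • A)‖ ≤ m⁻¹ * hfun η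
    rw [norm_smul ((1 - η) ^ (-β) * (1 + η) ^ (β - 1))
        (Ring.inverse ((μ * (1 - η)) • (1 : H →L[ℝ] H) + (1 + η) • A)),
      Real.norm_eq_abs, abs_of_nonneg hh0, hRinv η ⟨h1, h2⟩]
    calc hfun η * ‖Binv η‖ ≤ hfun η * m⁻¹ :=
          mul_le_mul_of_nonneg_left (hBinv_bound η ⟨h1, h2⟩) hh0
      _ = m⁻¹ * hfun η := by ring
  refine ⟨hFint, ?_⟩
  -- now the equality
  have hsin : 0 < Real.sin (Real.pi * β) :=
    Real.sin_pos_of_pos_of_lt_pi (by positivity) (by nlinarith [Real.pi_pos])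
  apply hext
  intro k
  rw [hAneg k, ContinuousLinearMap.smul_apply,
    ContinuousLinearMap.integral_apply hFint]
  have hcongr : ∀ η ∈ Set.Ioo (-1:ℝ) 1,
      (((1 - η) ^ (-β) * (1 + η) ^ (β - 1)) •
        Ring.inverse ((μ * (1 - η)) • (1 : H →L[ℝ] H) + (1 + η) • A)) (e k)
      = ((1 - η) ^ (-β) * (1 + η) ^ (β - 1) * (μ * (1 - η) + (1 + η) * lam k)⁻¹) • e k := by
    intro η hη
    rw [ContinuousLinearMap.smul_apply]
    have : Ring.inverse ((μ * (1 - η)) • (1 : H →L[ℝ] H) + (1 + η) • A) = Binv η :=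
      hRinv η hη
    rw [this, hBinvk, smul_smul]
  rw [setIntegral_congr_fun measurableSet_Ioo hcongr, integral_smul_const,
    (substAux hβ0 hβ1 hμ (hlam0 k)).2, smul_smul]
  congr 1
  have hμβ : μ ^ (1 - β) * μ ^ (β - 1) = 1 := by
    rw [← Real.rpow_add hμ]; norm_num
  have hre : 2 * μ ^ (1 - β) * Real.sin (Real.pi * β) / Real.pi *
      (Real.pi * μ ^ (β - 1) * lam k ^ (-β) / (2 * Real.sin (Real.pi * β)))
      = (μ ^ (1 - β) * μ ^ (β - 1)) * lam k ^ (-β) *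
        ((Real.pi / Real.pi) * ((2 * Real.sin (Real.pi * β)) / (2 * Real.sin (Real.pi * β)))) := by
    ring
  rw [hre, div_self Real.pi_ne_zero, div_self (by positivity), hμβ]
  ring
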